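/- Monotonicity of sn in its curvature argument: For every fixed t ≥ 0 and all real numbers k₁ ≤ k₂, one has sn(k₁, t) ≥ sn(k₂, t). -/
import Mathlib

/-- The function `sn(k, t)`: the standard Jacobi solution of `j'' = -k·j`,
truncated at its first positive zero. -/
noncomputable def sn (k t : ℝ) : ℝ :=
  if 0 < k then
    if t ≤ Real.pi / Real.sqrt k then Real.sin (Real.sqrt k * t) / Real.sqrt k else 0
  else if k = 0 then t
  else Real.sinh (Real.sqrt (-k) * t) / Real.sqrt (-k)

lemma convexOn_sinh : ConvexOn ℝ (Set.Ici (0:ℝ)) Real.sinh := by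
  apply convexOn_of_deriv2_nonneg (convex_Ici 0)
    Real.continuous_sinh.continuousOn
    Real.differentiable_sinh.differentiableOn
  · rw [Real.deriv_sinh]
    exact Real.differentiable_cosh.differentiableOn
  · intro x hx
    rw [interior_Ici, Set.mem_Ioi] at hx
    simp only [Function.iterate_succ, Function.iterate_zero, Function.comp_apply, id]
    rw [Real.deriv_sinh, Real.deriv_cosh]
    exact (Real.sinh_pos_iff.2 hx).le

/-- `b * sinh a ≤ a * sinh b` for `0 ≤ a ≤ b`. -/
lemma mul_sinh_le (a b : ℝ) (ha : 0 ≤ a) (hab : a ≤ b) :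
    b * Real.sinh a ≤ a * Real.sinh b := by
  rcases eq_or_lt_of_le (ha.trans hab) with h | hb
  · have : a = 0 := le_antisymm (hab.trans h.symm.le) ha
    simp [this, ← h]
  · have hw1 : (0:ℝ) ≤ 1 - a / b := by
      have : a / b ≤ 1 := div_le_one_of_le₀ hab hb.le
      linarith
    have hw2 : (0:ℝ) ≤ a / b := div_nonneg ha hb.le
    have hw3 : (1 - a / b) + a / b = 1 := by ring
    have key := convexOn_sinh.2 (Set.mem_Ici.2 le_rfl) (Set.mem_Ici.2 (ha.trans hab))
      hw1 hw2 hw3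
    simp only [smul_eq_mul, mul_zero, zero_add, Real.sinh_zero] at key
    rw [div_mul_cancel₀ _ hb.ne'] at key
    have := mul_le_mul_of_nonneg_left key hb.le
    calc b * Real.sinh a ≤ b * (a / b * Real.sinh b) := this
      _ = a * Real.sinh b := by field_simp

/-- `a * sin b ≤ b * sin a` for `0 ≤ a ≤ b ≤ π`. -/
lemma mul_sin_le (a b : ℝ) (ha : 0 ≤ a) (hab : a ≤ b) (hb : b ≤ Real.pi) :
    a * Real.sin b ≤ b * Real.sin a := by
  rcases eq_or_lt_of_le (ha.trans hab) with h | hbpos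
  · have : a = 0 := le_antisymm (hab.trans h.symm.le) ha
    simp [this, ← h]
  · have hw1 : (0:ℝ) ≤ 1 - a / b := by
      have : a / b ≤ 1 := div_le_one_of_le₀ hab hbpos.le
      linarith
    have hw2 : (0:ℝ) ≤ a / b := div_nonneg ha hbpos.le
    have hw3 : (1 - a / b) + a / b = 1 := by ring
    have key := strictConcaveOn_sin_Icc.concaveOn.2
      (Set.mem_Icc.2 ⟨le_rfl, Real.pi_pos.le⟩) (Set.mem_Icc.2 ⟨(ha.trans hab), hb⟩)
      hw1 hw2 hw3
    simp only [smul_eq_mul, mul_zero, zero_add, Real.sin_zero] at key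
    rw [div_mul_cancel₀ _ hbpos.ne'] at key
    have := mul_le_mul_of_nonneg_left key hbpos.le
    calc a * Real.sin b = b * (a / b * Real.sin b) := by field_simp
      _ ≤ b * Real.sin a := this

lemma sn_le_t (k t : ℝ) (ht : 0 ≤ t) (hk : 0 ≤ k) : sn k t ≤ t := by
  rcases eq_or_lt_of_le hk with h | hkpos
  · simp [sn, ← h]
  · have hsq : 0 < Real.sqrt k := Real.sqrt_pos.2 hkpos
    rw [sn, if_pos hkpos]
    split_ifs with h
    · rw [div_le_iff₀ hsq]
      calc Real.sin (Real.sqrt k * t) ≤ Real.sqrt k * t :=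
            Real.sin_le (by positivity)
        _ = t * Real.sqrt k := by ring
    · exact ht

lemma t_le_sn (k t : ℝ) (ht : 0 ≤ t) (hk : k < 0) : t ≤ sn k t := by
  have hsq : 0 < Real.sqrt (-k) := Real.sqrt_pos.2 (by linarith)
  rw [sn, if_neg (by linarith), if_neg (by linarith)]
  rw [le_div_iff₀ hsq]
  calc t * Real.sqrt (-k) = Real.sqrt (-k) * t := by ring
    _ ≤ Real.sinh (Real.sqrt (-k) * t) := Real.self_le_sinh_iff.2 (by positivity)

lemma sn_zero (k : ℝ) : sn k 0 = 0 := by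
  rcases lt_trichotomy k 0 with h | h | h
  · rw [sn, if_neg (by linarith), if_neg (by linarith)]; simp
  · simp [sn, h]
  · rw [sn, if_pos h, if_pos (by positivity)]; simp

/-- **Monotonicity of `sn` in its curvature argument.**
For every fixed `t ≥ 0` and all `k₁ ≤ k₂`, one has `sn(k₁, t) ≥ sn(k₂, t)`. -/
theorem sn_antitone_in_curvature (t : ℝ) (ht : 0 ≤ t) (k₁ k₂ : ℝ) (hk : k₁ ≤ k₂) :
    sn k₂ t ≤ sn k₁ t := by
  rcases eq_or_lt_of_le ht with h0 | ht'
  · rw [← h0, sn_zero, sn_zero]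
  rcases lt_trichotomy k₁ 0 with h1 | h1 | h1
  · rcases lt_or_ge k₂ 0 with h2 | h2
    · -- both negative
      have hs1 : 0 < Real.sqrt (-k₁) := Real.sqrt_pos.2 (by linarith)
      have hs2 : 0 < Real.sqrt (-k₂) := Real.sqrt_pos.2 (by linarith)
      have hss : Real.sqrt (-k₂) ≤ Real.sqrt (-k₁) := Real.sqrt_le_sqrt (by linarith)
      rw [sn, sn, if_neg (by linarith), if_neg (by linarith), if_neg (by linarith),
        if_neg (by linarith)]
      rw [div_le_div_iff₀ hs2 hs1]
      have := mul_sinh_le (Real.sqrt (-k₂) * t) (Real.sqrt (-k₁) * t)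
        (by positivity) (by nlinarith)
      nlinarith [this, ht']
    · exact (sn_le_t k₂ t ht h2).trans (t_le_sn k₁ t ht h1)
  · subst h1
    have : sn 0 t = t := by simp [sn]
    rw [this]
    exact sn_le_t k₂ t ht hk
  · -- both positive
    have h2 : 0 < k₂ := lt_of_lt_of_le h1 hk
    have hs1 : 0 < Real.sqrt k₁ := Real.sqrt_pos.2 h1
    have hs2 : 0 < Real.sqrt k₂ := Real.sqrt_pos.2 h2
    have hss : Real.sqrt k₁ ≤ Real.sqrt k₂ := Real.sqrt_le_sqrt hk
    rw [sn, sn, if_pos h1, if_pos h2]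
    split_ifs with ha hb hb
    · -- both untruncated
      rw [div_le_div_iff₀ hs2 hs1]
      have hb1 : Real.sqrt k₁ * t ≤ Real.pi := by
        rw [le_div_iff₀ hs1] at hb
        linarith [hb]
      have ha1 : Real.sqrt k₂ * t ≤ Real.pi := by
        rw [le_div_iff₀ hs2] at ha
        linarith [ha]
      have := mul_sin_le (Real.sqrt k₁ * t) (Real.sqrt k₂ * t)
        (by positivity) (by nlinarith) ha1
      nlinarith [this, ht']
    · -- k₂ untruncated, k₁ truncated: impossible
      exact absurd (ha.trans (div_le_div_of_nonneg_left Real.pi_pos.le hs1 hss)) hb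
    · -- k₂ truncated: 0 ≤ sin(√k₁ t)/√k₁
      apply div_nonneg _ hs1.le
      apply Real.sin_nonneg_of_nonneg_of_le_pi (by positivity)
      rw [le_div_iff₀ hs1] at hb
      linarith [hb]
    · exact le_rfl
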